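/- Let ω(k) = s k² + α k³ on ℝ with α ≠ 0 and k_* = −s/(3α). For k = k_*, the resonance function E(p,q;k_*) = 3α(p+q−2k_*)(p−k_*)(q−k_*) has a critical point at (p,q) = (k_*,k_*) whose Hessian matrix vanishes identically (i.e., the critical point is doubly degenerate), and under the linear change of variables δp = (x−y)/(6α)^{1/3}, δq = −(x+y)/(6α)^{1/3} (with δp = p−k_*, δq = q−k_*), E takes the normal form E = x²y − y³. -/

import Mathlib

section aux

private lemma zero_smulRight' {E F : Type*} [NormedAddCommGroup E] [NormedSpace ℝ E]
    [NormedAddCommGroup F] [NormedSpace ℝ F] (f : F) :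
    (0 : E →L[ℝ] ℝ).smulRight f = 0 := by
  ext v
  simp

variable (α k : ℝ)

/-- The resonance function centered at `(k,k)`. -/
private noncomputable def Efun : ℝ × ℝ → ℝ := fun pq =>
  3 * α * (pq.1 + pq.2 - 2 * k) * (pq.1 - k) * (pq.2 - k)

private noncomputable def Amap : ℝ × ℝ →L[ℝ] ℝ := ContinuousLinearMap.fst ℝ ℝ ℝ
private noncomputable def Bmap : ℝ × ℝ →L[ℝ] ℝ := ContinuousLinearMap.snd ℝ ℝ ℝ

/-- The derivative of `Efun` at `x`. -/
private noncomputable def Gfun : ℝ × ℝ → (ℝ × ℝ →L[ℝ] ℝ) := fun x =>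
  (3 * α * (x.1 - k + (x.2 - k)) * (x.1 - k)) • Bmap +
    (x.2 - k) • ((3 * α * (x.1 - k + (x.2 - k))) • Amap +
      (x.1 - k) • ((3 * α) • (Amap + Bmap)))

private lemma hasFDerivAt_Efun (x : ℝ × ℝ) :
    HasFDerivAt (Efun α k) (Gfun α k x) x := by
  have hE : Efun α k = fun y : ℝ × ℝ =>
      (3 * α * (y.1 - k + (y.2 - k)) * (y.1 - k)) * (y.2 - k) := by
    funext y; simp only [Efun]; ring
  rw [hE]
  have hv : HasFDerivAt (fun y : ℝ × ℝ => y.1 - k) (Amap) x :=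
    (hasFDerivAt_fst.sub_const k)
  have hw : HasFDerivAt (fun y : ℝ × ℝ => y.2 - k) (Bmap) x :=
    (hasFDerivAt_snd.sub_const k)
  have hu : HasFDerivAt (fun y : ℝ × ℝ => 3 * α * (y.1 - k + (y.2 - k)))
      ((3 * α) • (Amap + Bmap)) x := (hv.add hw).const_mul (3 * α)
  exact ((hu.mul hv).mul hw).congr_fderiv (by simp only [Gfun, Pi.mul_apply])

private lemma Gfun_center : Gfun α k (k, k) = 0 := by
  simp [Gfun]

private lemma hasFDerivAt_Gfun_center :
    HasFDerivAt (Gfun α k) (0 : ℝ × ℝ →L[ℝ] (ℝ × ℝ →L[ℝ] ℝ)) (k, k) := by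
  have hv : HasFDerivAt (fun y : ℝ × ℝ => y.1 - k) Amap (k, k) :=
    (hasFDerivAt_fst.sub_const k)
  have hw : HasFDerivAt (fun y : ℝ × ℝ => y.2 - k) Bmap (k, k) :=
    (hasFDerivAt_snd.sub_const k)
  have hu : HasFDerivAt (fun y : ℝ × ℝ => 3 * α * (y.1 - k + (y.2 - k)))
      ((3 * α) • (Amap + Bmap)) (k, k) := (hv.add hw).const_mul (3 * α)
  have hc1 : HasFDerivAt (fun y : ℝ × ℝ => 3 * α * (y.1 - k + (y.2 - k)) * (y.1 - k))
      ((3 * α * ((k : ℝ) - k + ((k : ℝ) - k))) • Amap +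
        ((k : ℝ) - k) • ((3 * α) • (Amap + Bmap))) (k, k) := hu.mul hv
  have h1 : HasFDerivAt
      (fun y : ℝ × ℝ => (3 * α * (y.1 - k + (y.2 - k)) * (y.1 - k)) • Bmap)
      (0 : ℝ × ℝ →L[ℝ] (ℝ × ℝ →L[ℝ] ℝ)) (k, k) := by
    refine (hc1.smul (hasFDerivAt_const (Bmap) ((k : ℝ), (k : ℝ)))).congr_fderiv ?_
    simp [zero_smulRight']
  have hinner : HasFDerivAt
      (fun y : ℝ × ℝ => (3 * α * (y.1 - k + (y.2 - k))) • Amap +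
        (y.1 - k) • ((3 * α) • (Amap + Bmap)))
      ((ContinuousLinearMap.smulRight ((3 * α) • (Amap + Bmap)) Amap) +
        (ContinuousLinearMap.smulRight Amap ((3 * α) • (Amap + Bmap)))) (k, k) := by
    refine ((hu.smul (hasFDerivAt_const (Amap) ((k : ℝ), (k : ℝ)))).add
      (hv.smul (hasFDerivAt_const ((3 * α) • (Amap + Bmap)) ((k : ℝ), (k : ℝ))))).congr_fderiv ?_
    simp
  have h2 : HasFDerivAt
      (fun y : ℝ × ℝ => (y.2 - k) • ((3 * α * (y.1 - k + (y.2 - k))) • Amap +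
        (y.1 - k) • ((3 * α) • (Amap + Bmap))))
      (0 : ℝ × ℝ →L[ℝ] (ℝ × ℝ →L[ℝ] ℝ)) (k, k) := by
    refine (hw.smul hinner).congr_fderiv ?_
    simp
  have h12 := h1.add h2
  rw [add_zero] at h12
  exact h12

private lemma fderiv_Efun : fderiv ℝ (Efun α k) = Gfun α k := by
  funext x
  exact (hasFDerivAt_Efun α k x).fderiv

end aux

/-- For the cubic dispersion, at `k = k_* = −s/(3α)` the resonance function
`E(p,q;k_*) = 3α(p+q−2k_*)(p−k_*)(q−k_*)` has a critical point at `(k_*,k_*)` with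
identically vanishing Hessian, and the linear change of variables
`δp = (x−y)/(6α)^{1/3}`, `δq = −(x+y)/(6α)^{1/3}` brings it to the normal form
`E = x²y − y³`. -/
theorem stmt13 (s α : ℝ) (hs : s = 1 ∨ s = -1) (hα : 0 < α) :
    let kst : ℝ := -s / (3 * α)
    let E : ℝ × ℝ → ℝ := fun pq =>
      3 * α * (pq.1 + pq.2 - 2 * kst) * (pq.1 - kst) * (pq.2 - kst)
    let c : ℝ := (6 * α) ^ ((1 : ℝ) / 3)
    fderiv ℝ E (kst, kst) = 0 ∧
    iteratedFDeriv ℝ 2 E (kst, kst) = 0 ∧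
    ∀ x y : ℝ, E (kst + (x - y) / c, kst + (-(x + y)) / c) = x ^ 2 * y - y ^ 3 := by
  intro kst E c
  have hEeq : E = Efun α kst := rfl
  refine ⟨?_, ?_, ?_⟩
  · rw [hEeq, fderiv_Efun, Gfun_center]
  · ext m
    rw [hEeq, iteratedFDeriv_two_apply, fderiv_Efun]
    have h : fderiv ℝ (Gfun α kst) (kst, kst) = 0 :=
      (hasFDerivAt_Gfun_center α kst).fderiv
    simp [h]
  · intro x y
    have h6 : (0 : ℝ) < 6 * α := by linarith
    have hc0 : 0 < c := Real.rpow_pos_of_pos h6 _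
    have hc : c ≠ 0 := ne_of_gt hc0
    have hc3 : c ^ (3 : ℕ) = 6 * α := by
      show ((6 * α) ^ ((1 : ℝ) / 3)) ^ (3 : ℕ) = 6 * α
      rw [← Real.rpow_natCast ((6 * α) ^ ((1 : ℝ) / 3)) 3,
        ← Real.rpow_mul h6.le]
      norm_num
    show 3 * α * ((kst + (x - y) / c) + (kst + (-(x + y)) / c) - 2 * kst) *
        ((kst + (x - y) / c) - kst) * ((kst + (-(x + y)) / c) - kst) =
        x ^ 2 * y - y ^ 3
    field_simp
    linear_combination (y ^ 3 - x ^ 2 * y) * hc3
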